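/- Let X ∈ ℝ^{D×D} be invertible with all columns of unit Euclidean norm. Then ‖X^{-1}‖_{1,2} := Σ_{d=1}^D ‖(X^{-1})_{d·}‖_2 ≥ D, with equality if and only if X is orthonormal. -/
import Mathlib

open Matrix

noncomputable def rowNorm {D : ℕ} (β : Matrix (Fin D) (Fin D) ℝ) (d : Fin D) : ℝ :=
  Real.sqrt (∑ j, (β d j) ^ 2)

noncomputable def colNorm {D : ℕ} (X : Matrix (Fin D) (Fin D) ℝ) (d : Fin D) : ℝ :=
  Real.sqrt (∑ i, (X i d) ^ 2)

theorem inv_norm12_ge_D {D : ℕ}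
    (X : Matrix (Fin D) (Fin D) ℝ) (hX : IsUnit X)
    (hcols : ∀ d : Fin D, colNorm X d = 1) :
    (D : ℝ) ≤ ∑ d, rowNorm X⁻¹ d ∧
      ((∑ d, rowNorm X⁻¹ d) = D ↔ Xᵀ * X = 1) := by
  have hdet : IsUnit X.det := (Matrix.isUnit_iff_isUnit_det X).mp hX
  have hinv : X⁻¹ * X = 1 := Matrix.nonsing_inv_mul X hdet
  have hdiag : ∀ d : Fin D, ∑ j, X⁻¹ d j * X j d = 1 := by
    intro d
    have := congrFun (congrFun hinv d) d
    simpa [Matrix.mul_apply, Matrix.one_apply] using this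
  have hcol2 : ∀ d : Fin D, ∑ i, (X i d) ^ 2 = 1 := by
    intro d
    have h := hcols d
    unfold colNorm at h
    exact Real.sqrt_eq_one.mp h
  have h1 : ∀ d : Fin D, 1 ≤ rowNorm X⁻¹ d := by
    intro d
    have hcs := Finset.sum_mul_sq_le_sq_mul_sq (Finset.univ : Finset (Fin D))
      (fun j => X⁻¹ d j) (fun j => X j d)
    simp only [hdiag d, hcol2 d, mul_one, one_pow] at hcs
    unfold rowNorm
    rw [Real.le_sqrt one_pos.le, one_pow]
    exact hcs
    all_goals exact Finset.sum_nonneg fun j _ => sq_nonneg _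
  have hsum : (D : ℝ) ≤ ∑ d, rowNorm X⁻¹ d := by
    calc (D : ℝ) = ∑ _d : Fin D, (1 : ℝ) := by simp
    _ ≤ ∑ d, rowNorm X⁻¹ d := Finset.sum_le_sum fun d _ => h1 d
  refine ⟨hsum, ⟨?_, ?_⟩⟩
  · intro heq
    -- each rowNorm = 1
    have hall : ∀ d : Fin D, rowNorm X⁻¹ d = 1 := by
      by_contra hcon
      push_neg at hcon
      obtain ⟨d0, hd0⟩ := hcon
      have hlt : 1 < rowNorm X⁻¹ d0 := lt_of_le_of_ne (h1 d0) (Ne.symm hd0)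
      have : (D : ℝ) < ∑ d, rowNorm X⁻¹ d := by
        calc (D : ℝ) = ∑ _d : Fin D, (1 : ℝ) := by simp
        _ < ∑ d, rowNorm X⁻¹ d :=
          Finset.sum_lt_sum (fun d _ => h1 d) ⟨d0, Finset.mem_univ d0, hlt⟩
      linarith [heq]
    -- rows of X⁻¹ equal columns of X
    have hrow2 : ∀ d : Fin D, ∑ j, (X⁻¹ d j) ^ 2 = 1 := by
      intro d
      have h := hall d
      unfold rowNorm at h
      exact Real.sqrt_eq_one.mp h
    have heqXT : Xᵀ = X⁻¹ := by
      ext d j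
      have hzero : ∑ j, (X⁻¹ d j - X j d) ^ 2 = 0 := by
        have hterm : ∀ j : Fin D, (X⁻¹ d j - X j d) ^ 2 =
            (X⁻¹ d j) ^ 2 - 2 * (X⁻¹ d j * X j d) + (X j d) ^ 2 := fun j => by ring
        rw [Finset.sum_congr rfl (fun j _ => hterm j), Finset.sum_add_distrib,
          Finset.sum_sub_distrib, ← Finset.mul_sum, hrow2 d, hdiag d, hcol2 d]
        ring
      have := (Finset.sum_eq_zero_iff_of_nonneg (fun j _ => sq_nonneg _)).mp hzero j
        (Finset.mem_univ j)
      have : X⁻¹ d j - X j d = 0 := by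
        have h := this
        nlinarith [sq_nonneg (X⁻¹ d j - X j d)]
      simp [Matrix.transpose_apply]
      linarith
    rw [heqXT]
    exact hinv
  · intro horth
    have heqXT : X⁻¹ = Xᵀ := by
      have : Xᵀ * X = 1 := horth
      exact Matrix.inv_eq_left_inv this
    have : ∀ d : Fin D, rowNorm X⁻¹ d = 1 := by
      intro d
      rw [heqXT]
      unfold rowNorm
      have : ∑ j, (Xᵀ d j) ^ 2 = 1 := by
        simpa [Matrix.transpose_apply] using hcol2 d
      rw [this, Real.sqrt_one]
    simp [this]
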